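/- Under hypotheses (H0)–(H3), if ψ: E→ℝ is Lipschitz with ⟨ψ,μ*⟩=0, then sup_{n≥1} E_μ |Z_n|^{2+δ} < ∞, where δ > 0 is the constant from hypothesis (H3); consequently the family (Z_n²)_{n≥1} is uniformly integrable: sup_{n≥1} E_μ(Z_n² 1_{{Z_n² ≥ k}}) ≤ k^{−δ/2} sup_{n≥1} E_μ|Z_n|^{2+δ} → 0 as k → ∞. -/

import Mathlib

open MeasureTheory ProbabilityTheory Filter Bornology
open scoped ENNReal NNReal Topology

variable {E : Type*} [MeasurableSpace E] [MetricSpace E] [CompleteSpace E]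
  [SecondCountableTopology E] [BorelSpace E]

/-- The Markov operator acting on functions: `Pf(x) = ∫ f(y) π(x, dy)`. -/
noncomputable def Pfun (π : Kernel E E) (f : E → ℝ) : E → ℝ := fun x => ∫ y, f y ∂(π x)

/-- The Markov operator acting on measures (the transfer operator `ν ↦ νP`). -/
noncomputable def Pmeas (π : Kernel E E) (ν : MeasureTheory.Measure E) :
    MeasureTheory.Measure E := ν.bind (fun x => π x)

/-- `ν ∈ M_{1,1}`: a Borel probability measure with finite first moment. -/
def FiniteFirstMoment (ν : MeasureTheory.Measure E) : Prop :=
  IsProbabilityMeasure ν ∧ ∃ x₀ : E, Integrable (fun x => dist x₀ x) ν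

/-- The Wasserstein (dual-Lipschitz) distance between two measures. -/
noncomputable def wassDist (ν₁ ν₂ : MeasureTheory.Measure E) : ℝ :=
  sSup {r : ℝ | ∃ f : E → ℝ, LipschitzWith 1 f ∧ r = |∫ x, f x ∂ν₁ - ∫ x, f x ∂ν₂|}

/-- The natural filtration of the coordinate process on `ℕ → E`. -/
def natFilt : Filtration ℕ (MeasurableSpace.pi : MeasurableSpace (ℕ → E)) :=
  Filtration.natural (fun k (ω : ℕ → E) => ω k)
    (fun k => (measurable_pi_apply k).stronglyMeasurable)

/-- `ℙ` is the law of the Markov chain on `E^ℕ` with transition probability `π` and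
initial distribution `ν`. -/
structure IsMarkovChainLaw (π : Kernel E E) (ν : MeasureTheory.Measure E)
    (P : MeasureTheory.Measure (ℕ → E)) : Prop where
  prob : IsProbabilityMeasure P
  init : P.map (fun ω => ω 0) = ν
  markov : ∀ (n : ℕ) (g : E → ℝ), Measurable g → IsBounded (Set.range g) →
    P[(fun ω => g (ω (n + 1))) | natFilt n] =ᵐ[P] fun ω => ∫ y, g y ∂(π (ω n))

/-- The corrector function `χ = ∑_{i≥0} Pⁱψ`. -/
noncomputable def chiFun (π : Kernel E E) (ψ : E → ℝ) : E → ℝ :=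
  fun x => ∑' i : ℕ, (Pfun π)^[i] ψ x

/-- The martingale `S_n = χ(X_n) - χ(X_0) + ∑_{i=0}^n ψ(X_i)` as a function of the trajectory. -/
noncomputable def SFun (π : Kernel E E) (ψ : E → ℝ) (n : ℕ) : (ℕ → E) → ℝ :=
  fun ω => chiFun π ψ (ω n) - chiFun π ψ (ω 0) + ∑ i ∈ Finset.range (n + 1), ψ (ω i)

/-- The martingale differences `Z_n = χ(X_n) - χ(X_{n-1}) + ψ(X_n)`. -/
noncomputable def ZFun (π : Kernel E E) (ψ : E → ℝ) (n : ℕ) : (ℕ → E) → ℝ :=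
  fun ω => chiFun π ψ (ω n) - chiFun π ψ (ω (n - 1)) + ψ (ω n)

section Aux

variable {E : Type*} [MeasurableSpace E] [MetricSpace E] [CompleteSpace E]
  [SecondCountableTopology E] [BorelSpace E]

lemma lipR_lipschitzWith {L : ℝ} {f : E → ℝ} (hL : 0 ≤ L)
    (hf : ∀ x y, |f x - f y| ≤ L * dist x y) : LipschitzWith L.toNNReal f := by
  refine LipschitzWith.of_dist_le_mul fun x y => ?_
  rw [Real.dist_eq, Real.coe_toNNReal _ hL]
  exact hf x y

lemma lipR_cont {L : ℝ} {f : E → ℝ} (hL : 0 ≤ L)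
    (hf : ∀ x y, |f x - f y| ≤ L * dist x y) : Continuous f :=
  (lipR_lipschitzWith hL hf).continuous

lemma lip1_bound {f : E → ℝ} (hf : LipschitzWith 1 f) (x y : E) : |f x - f y| ≤ dist x y := by
  have h := hf.dist_le_mul x y
  rwa [Real.dist_eq, NNReal.coe_one, one_mul] at h

lemma integrable_of_lipR {ν : MeasureTheory.Measure E} (hν : FiniteFirstMoment ν) {L : ℝ}
    {f : E → ℝ} (hL : 0 ≤ L) (hf : ∀ x y, |f x - f y| ≤ L * dist x y) : Integrable f ν := by
  obtain ⟨hp, x₀, hint⟩ := hν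
  haveI := hp
  refine Integrable.mono' ((integrable_const |f x₀|).add (hint.const_mul L))
    (lipR_cont hL hf).measurable.aestronglyMeasurable ?_
  filter_upwards with x
  simp only [Pi.add_apply]
  have h1 := hf x x₀
  rw [dist_comm] at h1
  have e : f x - f x₀ + f x₀ = f x := by ring
  have h2 : |f x| ≤ |f x - f x₀| + |f x₀| := by
    calc |f x| = |f x - f x₀ + f x₀| := by rw [e]
      _ ≤ |f x - f x₀| + |f x₀| := abs_add_le _ _
  rw [Real.norm_eq_abs]
  linarith

lemma integrable_dist_of_ffm {ν : MeasureTheory.Measure E} (hν : FiniteFirstMoment ν) (y : E) :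
    Integrable (fun x => dist y x) ν := by
  refine integrable_of_lipR hν zero_le_one fun a b => ?_
  rw [one_mul]
  simpa [dist_comm] using abs_dist_sub_le a b y

lemma wass_mem_zero (ν₁ ν₂ : MeasureTheory.Measure E) :
    (0:ℝ) ∈ {r : ℝ | ∃ f : E → ℝ, LipschitzWith 1 f ∧ r = |∫ x, f x ∂ν₁ - ∫ x, f x ∂ν₂|} :=
  ⟨fun _ => 0, (LipschitzWith.const 0).weaken zero_le_one, by simp⟩

lemma wass_bddAbove {ν₁ ν₂ : MeasureTheory.Measure E} (h₁ : FiniteFirstMoment ν₁)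
    (h₂ : FiniteFirstMoment ν₂) :
    BddAbove {r : ℝ | ∃ f : E → ℝ, LipschitzWith 1 f ∧ r = |∫ x, f x ∂ν₁ - ∫ x, f x ∂ν₂|} := by
  obtain ⟨hp₁, x₀, hi₁⟩ := h₁
  have hi₂ := integrable_dist_of_ffm h₂ x₀
  haveI := hp₁
  haveI := h₂.1
  refine ⟨(∫ x, dist x₀ x ∂ν₁) + ∫ x, dist x₀ x ∂ν₂, ?_⟩
  rintro r ⟨f, hf, rfl⟩
  have hfl : ∀ x y, |f x - f y| ≤ 1 * dist x y := fun x y => by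
    rw [one_mul]; exact lip1_bound hf x y
  have hint₁ : Integrable f ν₁ := integrable_of_lipR ⟨hp₁, x₀, hi₁⟩ zero_le_one hfl
  have hint₂ : Integrable f ν₂ := integrable_of_lipR h₂ zero_le_one hfl
  have key : ∀ (ν : MeasureTheory.Measure E), IsProbabilityMeasure ν → Integrable f ν →
      Integrable (fun x => dist x₀ x) ν →
      |∫ x, f x ∂ν - f x₀| ≤ ∫ x, dist x₀ x ∂ν := by
    intro ν hpν hfi hdi
    haveI := hpν
    have e : ∫ x, f x ∂ν - f x₀ = ∫ x, (f x - f x₀) ∂ν := by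
      rw [integral_sub hfi (integrable_const _), integral_const]; simp
    rw [e]
    calc |∫ x, (f x - f x₀) ∂ν| ≤ ∫ x, |f x - f x₀| ∂ν := by
          simpa [Real.norm_eq_abs] using norm_integral_le_integral_norm (fun x => f x - f x₀) (μ := ν)
      _ ≤ ∫ x, dist x₀ x ∂ν := by
          refine integral_mono (hfi.sub (integrable_const _)).abs hdi fun x => ?_
          have := lip1_bound hf x x₀
          rwa [dist_comm] at this
  have k₁ := key ν₁ hp₁ hint₁ hi₁
  have k₂ := key ν₂ h₂.1 hint₂ hi₂
  have : |∫ x, f x ∂ν₁ - ∫ x, f x ∂ν₂| ≤ |∫ x, f x ∂ν₁ - f x₀| + |∫ x, f x ∂ν₂ - f x₀| := by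
    have := abs_sub (∫ x, f x ∂ν₁ - f x₀) (∫ x, f x ∂ν₂ - f x₀)
    have e : (∫ x, f x ∂ν₁ - f x₀) - (∫ x, f x ∂ν₂ - f x₀) = ∫ x, f x ∂ν₁ - ∫ x, f x ∂ν₂ := by ring
    rw [e] at this
    exact this
  linarith

lemma abs_sub_integral_le {ν₁ ν₂ : MeasureTheory.Measure E} (h₁ : FiniteFirstMoment ν₁)
    (h₂ : FiniteFirstMoment ν₂) {f : E → ℝ} (hf : LipschitzWith 1 f) :
    |∫ x, f x ∂ν₁ - ∫ x, f x ∂ν₂| ≤ wassDist ν₁ ν₂ :=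
  le_csSup (wass_bddAbove h₁ h₂) ⟨f, hf, rfl⟩

lemma wass_nonneg {ν₁ ν₂ : MeasureTheory.Measure E} (h₁ : FiniteFirstMoment ν₁)
    (h₂ : FiniteFirstMoment ν₂) : 0 ≤ wassDist ν₁ ν₂ :=
  le_csSup (wass_bddAbove h₁ h₂) (wass_mem_zero ν₁ ν₂)

lemma wass_le_of_forall {ν₁ ν₂ : MeasureTheory.Measure E} {b : ℝ}
    (h : ∀ f : E → ℝ, LipschitzWith 1 f → |∫ x, f x ∂ν₁ - ∫ x, f x ∂ν₂| ≤ b) :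
    wassDist ν₁ ν₂ ≤ b := by
  refine csSup_le ⟨0, wass_mem_zero ν₁ ν₂⟩ ?_
  rintro r ⟨f, hf, rfl⟩
  exact h f hf

lemma abs_sub_integral_le_mul {ν₁ ν₂ : MeasureTheory.Measure E} (h₁ : FiniteFirstMoment ν₁)
    (h₂ : FiniteFirstMoment ν₂) {L : ℝ} {f : E → ℝ} (hL : 0 < L)
    (hf : ∀ x y, |f x - f y| ≤ L * dist x y) :
    |∫ x, f x ∂ν₁ - ∫ x, f x ∂ν₂| ≤ L * wassDist ν₁ ν₂ := by
  have hg1 : LipschitzWith 1 (fun x => L⁻¹ * f x) := by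
    refine LipschitzWith.of_dist_le_mul fun x y => ?_
    rw [Real.dist_eq, NNReal.coe_one, one_mul]
    have e : L⁻¹ * f x - L⁻¹ * f y = L⁻¹ * (f x - f y) := by ring
    rw [e, abs_mul, abs_of_pos (inv_pos.mpr hL)]
    calc L⁻¹ * |f x - f y| ≤ L⁻¹ * (L * dist x y) :=
          mul_le_mul_of_nonneg_left (hf x y) (inv_pos.mpr hL).le
      _ = dist x y := by field_simp
  have h := abs_sub_integral_le h₁ h₂ hg1
  rw [integral_const_mul, integral_const_mul] at h
  have e : L⁻¹ * ∫ x, f x ∂ν₁ - L⁻¹ * ∫ x, f x ∂ν₂ = L⁻¹ * (∫ x, f x ∂ν₁ - ∫ x, f x ∂ν₂) := by ring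
  rw [e, abs_mul, abs_of_pos (inv_pos.mpr hL)] at h
  calc |∫ x, f x ∂ν₁ - ∫ x, f x ∂ν₂| = L * (L⁻¹ * |∫ x, f x ∂ν₁ - ∫ x, f x ∂ν₂|) := by field_simp
    _ ≤ L * wassDist ν₁ ν₂ := mul_le_mul_of_nonneg_left h hL.le

lemma wass_dirac_le (x y : E) :
    wassDist (MeasureTheory.Measure.dirac x) (MeasureTheory.Measure.dirac y) ≤ dist x y := by
  refine wass_le_of_forall fun f hf => ?_
  rw [integral_dirac, integral_dirac]
  exact lip1_bound hf x y

lemma ffm_dirac (x : E) : FiniteFirstMoment (MeasureTheory.Measure.dirac x) := by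
  refine ⟨inferInstance, x, ?_⟩
  refine ⟨(continuous_const.dist continuous_id).aestronglyMeasurable, ?_⟩
  simp [HasFiniteIntegral, lintegral_dirac]

lemma ffm_iter (π : Kernel E E) [IsMarkovKernel π]
    (hH1 : ∀ ν : MeasureTheory.Measure E, FiniteFirstMoment ν → FiniteFirstMoment (Pmeas π ν))
    {ν : MeasureTheory.Measure E} (hν : FiniteFirstMoment ν) :
    ∀ i : ℕ, FiniteFirstMoment ((Pmeas π)^[i] ν)
  | 0 => by simpa using hν
  | (i+1) => by
      rw [Function.iterate_succ_apply']
      exact hH1 _ (ffm_iter π hH1 hν i)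

lemma integral_Pmeas_eq (π : Kernel E E) [IsMarkovKernel π] {ν : MeasureTheory.Measure E}
    (hbind : FiniteFirstMoment (Pmeas π ν)) {L : ℝ} {f : E → ℝ}
    (hL : 0 ≤ L) (hf : ∀ x y, |f x - f y| ≤ L * dist x y) :
    ∫ x, f x ∂(Pmeas π ν) = ∫ x, Pfun π f x ∂ν := by
  have hm : Measurable f := (lipR_cont hL hf).measurable
  have hint : Integrable f (Pmeas π ν) := integrable_of_lipR hbind hL hf
  have hmp : Measurable (fun x : E => (π x : MeasureTheory.Measure E)) := π.measurable
  have hgpm : Measurable (fun y => ENNReal.ofReal (f y)) := hm.ennreal_ofReal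
  have hgnm : Measurable (fun y => ENNReal.ofReal (-f y)) := hm.neg.ennreal_ofReal
  have hbp : ∫⁻ y, ENNReal.ofReal (f y) ∂(Pmeas π ν)
      = ∫⁻ x, ∫⁻ y, ENNReal.ofReal (f y) ∂(π x) ∂ν :=
    MeasureTheory.Measure.lintegral_bind hmp.aemeasurable hgpm.aemeasurable
  have hbn : ∫⁻ y, ENNReal.ofReal (-f y) ∂(Pmeas π ν)
      = ∫⁻ x, ∫⁻ y, ENNReal.ofReal (-f y) ∂(π x) ∂ν :=
    MeasureTheory.Measure.lintegral_bind hmp.aemeasurable hgnm.aemeasurable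
  have hfb := hint.hasFiniteIntegral
  rw [HasFiniteIntegral] at hfb
  have hfinp : ∫⁻ y, ENNReal.ofReal (f y) ∂(Pmeas π ν) ≠ ∞ := by
    refine ne_of_lt (lt_of_le_of_lt (lintegral_mono fun y => ?_) hfb)
    calc ENNReal.ofReal (f y) ≤ ENNReal.ofReal ‖f y‖ :=
          ENNReal.ofReal_le_ofReal (by rw [Real.norm_eq_abs]; exact le_abs_self _)
      _ = (‖f y‖₊ : ℝ≥0∞) := ofReal_norm _
  have hfinn : ∫⁻ y, ENNReal.ofReal (-f y) ∂(Pmeas π ν) ≠ ∞ := by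
    refine ne_of_lt (lt_of_le_of_lt (lintegral_mono fun y => ?_) hfb)
    calc ENNReal.ofReal (-f y) ≤ ENNReal.ofReal ‖f y‖ :=
          ENNReal.ofReal_le_ofReal (by rw [Real.norm_eq_abs]; exact neg_le_abs _)
      _ = (‖f y‖₊ : ℝ≥0∞) := ofReal_norm _
  have haep : ∀ᵐ x ∂ν, ∫⁻ y, ENNReal.ofReal (f y) ∂(π x) < ∞ :=
    ae_lt_top hgpm.lintegral_kernel (by rw [← hbp]; exact hfinp)
  have haen : ∀ᵐ x ∂ν, ∫⁻ y, ENNReal.ofReal (-f y) ∂(π x) < ∞ :=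
    ae_lt_top hgnm.lintegral_kernel (by rw [← hbn]; exact hfinn)
  have haei : ∀ᵐ x ∂ν, Integrable f (π x) := by
    filter_upwards [haep, haen] with x hxp hxn
    refine ⟨hm.aestronglyMeasurable, ?_⟩
    rw [HasFiniteIntegral]
    have hb : ∀ y, (‖f y‖₊ : ℝ≥0∞) ≤ ENNReal.ofReal (f y) + ENNReal.ofReal (-f y) := by
      intro y
      rw [← enorm_eq_nnnorm, ← ofReal_norm, Real.norm_eq_abs]
      rcases le_total 0 (f y) with h | h
      · rw [abs_of_nonneg h]; exact le_add_of_le_of_nonneg le_rfl zero_le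
      · rw [abs_of_nonpos h]
        exact le_add_of_nonneg_of_le zero_le (ENNReal.ofReal_le_ofReal le_rfl)
    calc ∫⁻ y, (‖f y‖₊ : ℝ≥0∞) ∂(π x)
        ≤ ∫⁻ y, (ENNReal.ofReal (f y) + ENNReal.ofReal (-f y)) ∂(π x) := lintegral_mono hb
      _ = (∫⁻ y, ENNReal.ofReal (f y) ∂(π x)) + ∫⁻ y, ENNReal.ofReal (-f y) ∂(π x) :=
          lintegral_add_left hgpm _
      _ < ∞ := ENNReal.add_lt_top.mpr ⟨hxp, hxn⟩
  have hpt : ∀ᵐ x ∂ν, Pfun π f x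
      = (∫⁻ y, ENNReal.ofReal (f y) ∂(π x)).toReal
        - (∫⁻ y, ENNReal.ofReal (-f y) ∂(π x)).toReal := by
    filter_upwards [haei] with x hx
    exact integral_eq_lintegral_pos_part_sub_lintegral_neg_part hx
  have hip : Integrable (fun x => (∫⁻ y, ENNReal.ofReal (f y) ∂(π x)).toReal) ν :=
    integrable_toReal_of_lintegral_ne_top hgpm.lintegral_kernel.aemeasurable
      (by rw [← hbp]; exact hfinp)
  have hin : Integrable (fun x => (∫⁻ y, ENNReal.ofReal (-f y) ∂(π x)).toReal) ν :=
    integrable_toReal_of_lintegral_ne_top hgnm.lintegral_kernel.aemeasurable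
      (by rw [← hbn]; exact hfinn)
  calc ∫ x, f x ∂(Pmeas π ν)
      = (∫⁻ y, ENNReal.ofReal (f y) ∂(Pmeas π ν)).toReal
        - (∫⁻ y, ENNReal.ofReal (-f y) ∂(Pmeas π ν)).toReal :=
        integral_eq_lintegral_pos_part_sub_lintegral_neg_part hint
    _ = (∫⁻ x, ∫⁻ y, ENNReal.ofReal (f y) ∂(π x) ∂ν).toReal
        - (∫⁻ x, ∫⁻ y, ENNReal.ofReal (-f y) ∂(π x) ∂ν).toReal := by rw [hbp, hbn]
    _ = (∫ x, (∫⁻ y, ENNReal.ofReal (f y) ∂(π x)).toReal ∂ν)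
        - ∫ x, (∫⁻ y, ENNReal.ofReal (-f y) ∂(π x)).toReal ∂ν := by
        rw [integral_toReal hgpm.lintegral_kernel.aemeasurable haep,
          integral_toReal hgnm.lintegral_kernel.aemeasurable haen]
    _ = ∫ x, ((∫⁻ y, ENNReal.ofReal (f y) ∂(π x)).toReal
        - (∫⁻ y, ENNReal.ofReal (-f y) ∂(π x)).toReal) ∂ν := (integral_sub hip hin).symm
    _ = ∫ x, Pfun π f x ∂ν := integral_congr_ae (hpt.mono fun x hx => hx.symm)

lemma Pfun_eq_integral_dirac (π : Kernel E E) [IsMarkovKernel π]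
    (hH1 : ∀ ν : MeasureTheory.Measure E, FiniteFirstMoment ν → FiniteFirstMoment (Pmeas π ν))
    {L : ℝ} {f : E → ℝ} (hL : 0 ≤ L) (hf : ∀ x y, |f x - f y| ≤ L * dist x y) (x : E) :
    Pfun π f x = ∫ y, f y ∂(Pmeas π (MeasureTheory.Measure.dirac x)) := by
  rw [integral_Pmeas_eq π (hH1 _ (ffm_dirac x)) hL hf, integral_dirac]

lemma lipR_Pfun (π : Kernel E E) [IsMarkovKernel π] {γ c : ℝ}
    (hγ : γ ∈ Set.Ioo (0 : ℝ) 1) (hc : 0 < c)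
    (hH1 : ∀ ν : MeasureTheory.Measure E, FiniteFirstMoment ν → FiniteFirstMoment (Pmeas π ν))
    (hH2 : ∀ n : ℕ, 1 ≤ n → ∀ ν₁ ν₂ : MeasureTheory.Measure E, FiniteFirstMoment ν₁ →
      FiniteFirstMoment ν₂ →
      wassDist ((Pmeas π)^[n] ν₁) ((Pmeas π)^[n] ν₂) ≤ c * γ ^ n * wassDist ν₁ ν₂)
    {L : ℝ} {f : E → ℝ} (hL : 0 < L) (hf : ∀ x y, |f x - f y| ≤ L * dist x y) :
    ∀ x y, |Pfun π f x - Pfun π f y| ≤ (L * (c * γ)) * dist x y := by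
  intro x y
  rw [Pfun_eq_integral_dirac π hH1 hL.le hf x, Pfun_eq_integral_dirac π hH1 hL.le hf y]
  have h1 := abs_sub_integral_le_mul (hH1 _ (ffm_dirac x)) (hH1 _ (ffm_dirac y)) hL hf
  have h2 := hH2 1 le_rfl (MeasureTheory.Measure.dirac x) (MeasureTheory.Measure.dirac y)
    (ffm_dirac x) (ffm_dirac y)
  simp only [Function.iterate_one, pow_one] at h2
  have h3 := wass_dirac_le x y
  have h0 := wass_nonneg (hH1 _ (ffm_dirac x)) (hH1 _ (ffm_dirac y))
  have h4 : wassDist (Pmeas π (MeasureTheory.Measure.dirac x))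
      (Pmeas π (MeasureTheory.Measure.dirac y)) ≤ c * γ * dist x y :=
    h2.trans (mul_le_mul_of_nonneg_left h3 (mul_nonneg hc.le hγ.1.le))
  have h5 := h1.trans (mul_le_mul_of_nonneg_left h4 hL.le)
  exact h5.trans (le_of_eq (by ring))

lemma Pfun_iter_eq (π : Kernel E E) [IsMarkovKernel π] {γ c : ℝ}
    (hγ : γ ∈ Set.Ioo (0 : ℝ) 1) (hc : 0 < c)
    (hH1 : ∀ ν : MeasureTheory.Measure E, FiniteFirstMoment ν → FiniteFirstMoment (Pmeas π ν))
    (hH2 : ∀ n : ℕ, 1 ≤ n → ∀ ν₁ ν₂ : MeasureTheory.Measure E, FiniteFirstMoment ν₁ →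
      FiniteFirstMoment ν₂ →
      wassDist ((Pmeas π)^[n] ν₁) ((Pmeas π)^[n] ν₂) ≤ c * γ ^ n * wassDist ν₁ ν₂) :
    ∀ (i : ℕ) {L : ℝ} {f : E → ℝ}, 0 < L → (∀ x y, |f x - f y| ≤ L * dist x y) → ∀ x : E,
      (Pfun π)^[i] f x = ∫ y, f y ∂((Pmeas π)^[i] (MeasureTheory.Measure.dirac x)) := by
  intro i
  induction i with
  | zero => intro L f hL hf x; simp [integral_dirac]
  | succ i ih =>
    intro L f hL hf x
    rw [Function.iterate_succ_apply]
    rw [ih (mul_pos hL (mul_pos hc hγ.1)) (lipR_Pfun π hγ hc hH1 hH2 hL hf) x]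
    rw [← integral_Pmeas_eq π (hH1 _ (ffm_iter π hH1 (ffm_dirac x) i)) hL.le hf]
    rw [Function.iterate_succ_apply']

lemma add3_rpow_le {a b c p : ℝ} (ha : 0 ≤ a) (hb : 0 ≤ b) (hc : 0 ≤ c) (hp : 0 ≤ p) :
    (a + b + c) ^ p ≤ 3 ^ p * (a ^ p + b ^ p + c ^ p) := by
  set m := max a (max b c) with hm
  have hmnn : 0 ≤ m := le_trans ha (le_max_left _ _)
  have h1 : a + b + c ≤ 3 * m := by
    have h2 := le_max_left a (max b c)
    have h3 := le_trans (le_max_left b c) (le_max_right a (max b c))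
    have h4 := le_trans (le_max_right b c) (le_max_right a (max b c))
    linarith
  have h2 : (a + b + c) ^ p ≤ (3 * m) ^ p := Real.rpow_le_rpow (by linarith) h1 hp
  have h3 : (3 * m : ℝ) ^ p = 3 ^ p * m ^ p := Real.mul_rpow (by norm_num) hmnn
  have h4 : m ^ p ≤ a ^ p + b ^ p + c ^ p := by
    have hap := Real.rpow_nonneg ha p
    have hbp := Real.rpow_nonneg hb p
    have hcp := Real.rpow_nonneg hc p
    rcases le_total a (max b c) with h | h
    · rcases le_total b c with h' | h'
      · rw [hm, max_eq_right h, max_eq_right h']; linarith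
      · rw [hm, max_eq_right h, max_eq_left h']; linarith
    · rw [hm, max_eq_left h]; linarith
  have h5 : (0:ℝ) ≤ 3 ^ p := Real.rpow_nonneg (by norm_num) p
  calc (a + b + c) ^ p ≤ (3 * m) ^ p := h2
    _ = 3 ^ p * m ^ p := h3
    _ ≤ 3 ^ p * (a ^ p + b ^ p + c ^ p) := mul_le_mul_of_nonneg_left h4 h5

end Aux

/-- `sup_{n≥1} E_μ |Z_n|^{2+δ} < ∞` and the resulting uniform integrability of `(Z_n²)`. -/
theorem Zn_uniform_moment_bound_and_uniform_integrability
    {E : Type*} [MeasurableSpace E] [MetricSpace E] [CompleteSpace E]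
    [SecondCountableTopology E] [BorelSpace E]
    (π : Kernel E E) [IsMarkovKernel π] (γ c : ℝ) (hγ : γ ∈ Set.Ioo (0 : ℝ) 1) (hc : 0 < c)
    -- (H0): the Feller property
    (hH0 : ∀ f : E → ℝ, Continuous f → IsBounded (Set.range f) → Continuous (Pfun π f))
    -- (H1): `P` preserves `M_{1,1}`
    (hH1 : ∀ ν : MeasureTheory.Measure E, FiniteFirstMoment ν → FiniteFirstMoment (Pmeas π ν))
    -- (H2): spectral gap in the Wasserstein metric
    (hH2 : ∀ n : ℕ, 1 ≤ n → ∀ ν₁ ν₂ : MeasureTheory.Measure E, FiniteFirstMoment ν₁ →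
      FiniteFirstMoment ν₂ →
      wassDist ((Pmeas π)^[n] ν₁) ((Pmeas π)^[n] ν₂) ≤ c * γ ^ n * wassDist ν₁ ν₂)
    -- the chain: initial distribution `μ ∈ M_{1,1}` and its law `Pμ` on `E^ℕ`
    (μ : MeasureTheory.Measure E) (hμ : FiniteFirstMoment μ)
    (Pμ : MeasureTheory.Measure (ℕ → E)) (hPμ : IsMarkovChainLaw π μ Pμ)
    -- (H3): uniformly bounded moments of order `2 + δ`
    (x₀ : E) (δ : ℝ) (hδ : 0 < δ)
    (hH3int : ∀ n : ℕ, Integrable (fun ω : ℕ → E => dist x₀ (ω n) ^ (2 + δ)) Pμ)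
    (hH3 : ∃ M : ℝ, ∀ n : ℕ, ∫ ω : ℕ → E, dist x₀ (ω n) ^ (2 + δ) ∂Pμ ≤ M)
    -- the unique invariant measure `μ* ∈ M_{1,1}`
    (μstar : MeasureTheory.Measure E) (hμstar : FiniteFirstMoment μstar)
    (hinv : Pmeas π μstar = μstar)
    (huniq : ∀ ν : MeasureTheory.Measure E, IsProbabilityMeasure ν → Pmeas π ν = ν → ν = μstar)
    -- `ψ` is Lipschitz with `⟨ψ, μ*⟩ = 0`
    (ψ : E → ℝ) (Lψ : ℝ≥0) (hψ : LipschitzWith Lψ ψ) (hψ0 : ∫ x, ψ x ∂μstar = 0) :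
    ∃ M : ℝ,
      (∀ n : ℕ, 1 ≤ n → Integrable (fun ω => |ZFun π ψ n ω| ^ (2 + δ)) Pμ) ∧
      (∀ n : ℕ, 1 ≤ n → ∫ ω, |ZFun π ψ n ω| ^ (2 + δ) ∂Pμ ≤ M) ∧
      (∀ k : ℝ, 0 < k → ∀ n : ℕ, 1 ≤ n →
        ∫ ω in {ω : ℕ → E | k ≤ (ZFun π ψ n ω) ^ 2}, (ZFun π ψ n ω) ^ 2 ∂Pμ ≤
          k ^ (-(δ / 2)) * M) ∧
      Tendsto (fun k : ℝ => k ^ (-(δ / 2)) * M) atTop (𝓝 0) := by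
  obtain ⟨hpstar, xbar, hstarint⟩ := hμstar
  have ffmstar : FiniteFirstMoment μstar := ⟨hpstar, xbar, hstarint⟩
  haveI := hPμ.prob
  haveI := hpstar
  have hγ0 : (0:ℝ) < γ := hγ.1
  have hγ1 : γ < 1 := hγ.2
  have h1γ : (0:ℝ) < 1 - γ := by linarith
  set Lc : ℝ := (Lψ : ℝ) + 1 with hLcdef
  have hLc : 0 < Lc := by rw [hLcdef]; positivity
  have hψ' : ∀ x y, |ψ x - ψ y| ≤ Lc * dist x y := by
    intro x y
    have h := hψ.dist_le_mul x y
    rw [Real.dist_eq] at h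
    have h2 : (Lψ : ℝ) * dist x y ≤ Lc * dist x y :=
      mul_le_mul_of_nonneg_right (by rw [hLcdef]; linarith) dist_nonneg
    linarith
  set cm : ℝ := max c 1 with hcmdef
  have hcm1 : (1:ℝ) ≤ cm := le_max_right _ _
  have hccm : c ≤ cm := le_max_left _ _
  set K0 : ℝ := Lc * cm with hK0def
  have hK0 : 0 < K0 := by rw [hK0def]; nlinarith
  set Cst : ℝ := ∫ x, dist xbar x ∂μstar with hCstdef
  have hCst0 : 0 ≤ Cst := by rw [hCstdef]; exact integral_nonneg fun x => dist_nonneg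
  have hinviter : ∀ i : ℕ, (Pmeas π)^[i] μstar = μstar := by
    intro i
    induction i with
    | zero => simp
    | succ i ih => rw [Function.iterate_succ_apply', ih, hinv]
  have hWstar : ∀ x : E, wassDist (MeasureTheory.Measure.dirac x) μstar ≤ dist xbar x + Cst := by
    intro x
    refine wass_le_of_forall fun f hf => ?_
    rw [integral_dirac]
    have hfi : Integrable f μstar :=
      integrable_of_lipR ffmstar zero_le_one fun a b => by rw [one_mul]; exact lip1_bound hf a b
    have key : f x - ∫ y, f y ∂μstar = ∫ y, (f x - f y) ∂μstar := by
      rw [integral_sub (integrable_const _) hfi, integral_const]; simp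
    rw [key]
    calc |∫ y, (f x - f y) ∂μstar| ≤ ∫ y, |f x - f y| ∂μstar := by
          simpa [Real.norm_eq_abs] using
            norm_integral_le_integral_norm (μ := μstar) (fun y => f x - f y)
      _ ≤ ∫ y, (dist xbar x + dist xbar y) ∂μstar := by
          refine integral_mono ((integrable_const _).sub hfi).abs
            ((integrable_const _).add (integrable_dist_of_ffm ffmstar xbar)) fun y => ?_
          have h1 := lip1_bound hf x y
          have h2 := dist_triangle x xbar y
          have h3 : dist x xbar = dist xbar x := dist_comm _ _
          linarith
      _ = dist xbar x + Cst := by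
          rw [integral_add (integrable_const _) (integrable_dist_of_ffm ffmstar xbar),
            integral_const]
          simp [hCstdef]
  have hgb : ∀ (i : ℕ) (x : E), |(Pfun π)^[i] ψ x| ≤ K0 * γ ^ i * (dist xbar x + Cst) := by
    intro i x
    have hBnn : 0 ≤ dist xbar x + Cst := by linarith [dist_nonneg (x := xbar) (y := x)]
    have hW0 : 0 ≤ wassDist (MeasureTheory.Measure.dirac x) μstar :=
      wass_nonneg (ffm_dirac x) ffmstar
    cases i with
    | zero =>
      simp only [Function.iterate_zero, id_eq, pow_zero, mul_one]
      have h1 := abs_sub_integral_le_mul (ffm_dirac x) ffmstar hLc hψ'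
      rw [integral_dirac, hψ0, sub_zero] at h1
      have h2 : Lc * wassDist (MeasureTheory.Measure.dirac x) μstar ≤ Lc * (dist xbar x + Cst) :=
        mul_le_mul_of_nonneg_left (hWstar x) hLc.le
      have h3 : Lc * (dist xbar x + Cst) ≤ K0 * (dist xbar x + Cst) := by
        have hLK : Lc ≤ K0 := by rw [hK0def]; nlinarith
        exact mul_le_mul_of_nonneg_right hLK hBnn
      linarith
    | succ j =>
      have hn : 1 ≤ j + 1 := Nat.le_add_left 1 j
      rw [Pfun_iter_eq π hγ hc hH1 hH2 (j+1) hLc hψ' x]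
      have h1 := abs_sub_integral_le_mul (ffm_iter π hH1 (ffm_dirac x) (j+1))
        (ffm_iter π hH1 ffmstar (j+1)) hLc hψ'
      have h2 := hH2 (j+1) hn (MeasureTheory.Measure.dirac x) μstar (ffm_dirac x) ffmstar
      rw [hinviter (j+1)] at h1 h2
      rw [hψ0, sub_zero] at h1
      have hγp : (0:ℝ) < γ ^ (j+1) := pow_pos hγ0 _
      have h3 : wassDist ((Pmeas π)^[j+1] (MeasureTheory.Measure.dirac x)) μstar
          ≤ c * γ ^ (j+1) * (dist xbar x + Cst) :=
        h2.trans (mul_le_mul_of_nonneg_left (hWstar x) (mul_nonneg hc.le hγp.le))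
      have h4 := h1.trans (mul_le_mul_of_nonneg_left h3 hLc.le)
      have h5 : Lc * (c * γ ^ (j+1) * (dist xbar x + Cst))
          ≤ K0 * γ ^ (j+1) * (dist xbar x + Cst) := by
        rw [hK0def]
        nlinarith [mul_nonneg (mul_nonneg (mul_nonneg hLc.le (sub_nonneg.mpr hccm)) hγp.le) hBnn]
      linarith
  have hgd : ∀ (i : ℕ) (x y : E),
      |(Pfun π)^[i] ψ x - (Pfun π)^[i] ψ y| ≤ K0 * γ ^ i * dist x y := by
    intro i x y
    have hdnn : (0:ℝ) ≤ dist x y := dist_nonneg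
    cases i with
    | zero =>
      simp only [Function.iterate_zero, id_eq, pow_zero, mul_one]
      have h3 : Lc * dist x y ≤ K0 * dist x y := by
        have hLK : Lc ≤ K0 := by rw [hK0def]; nlinarith
        exact mul_le_mul_of_nonneg_right hLK hdnn
      linarith [hψ' x y]
    | succ j =>
      have hn : 1 ≤ j + 1 := Nat.le_add_left 1 j
      rw [Pfun_iter_eq π hγ hc hH1 hH2 (j+1) hLc hψ' x,
        Pfun_iter_eq π hγ hc hH1 hH2 (j+1) hLc hψ' y]
      have h1 := abs_sub_integral_le_mul (ffm_iter π hH1 (ffm_dirac x) (j+1))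
        (ffm_iter π hH1 (ffm_dirac y) (j+1)) hLc hψ'
      have h2 := hH2 (j+1) hn _ _ (ffm_dirac x) (ffm_dirac y)
      have h3 := wass_dirac_le x y
      have hγp : (0:ℝ) < γ ^ (j+1) := pow_pos hγ0 _
      have h4 : wassDist ((Pmeas π)^[j+1] (MeasureTheory.Measure.dirac x))
          ((Pmeas π)^[j+1] (MeasureTheory.Measure.dirac y)) ≤ c * γ ^ (j+1) * dist x y :=
        h2.trans (mul_le_mul_of_nonneg_left h3 (mul_nonneg hc.le hγp.le))
      have h5 := h1.trans (mul_le_mul_of_nonneg_left h4 hLc.le)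
      have h6 : Lc * (c * γ ^ (j+1) * dist x y) ≤ K0 * γ ^ (j+1) * dist x y := by
        rw [hK0def]
        nlinarith [mul_nonneg (mul_nonneg (mul_nonneg hLc.le (sub_nonneg.mpr hccm)) hγp.le) hdnn]
      linarith
  have hgeo : Summable fun i : ℕ => γ ^ i := summable_geometric_of_lt_one hγ0.le hγ1
  have hsumg : ∀ x : E, Summable fun i : ℕ => (Pfun π)^[i] ψ x := by
    intro x
    refine Summable.of_norm_bounded (g := fun i => (K0 * (dist xbar x + Cst)) * γ ^ i)
      (hgeo.mul_left _) fun i => ?_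
    rw [Real.norm_eq_abs]
    calc |(Pfun π)^[i] ψ x| ≤ K0 * γ ^ i * (dist xbar x + Cst) := hgb i x
      _ = (K0 * (dist xbar x + Cst)) * γ ^ i := by ring
  set Kχ : ℝ := K0 * (1 - γ)⁻¹ with hKχdef
  have hKχ : 0 < Kχ := by rw [hKχdef]; exact mul_pos hK0 (inv_pos.mpr h1γ)
  have hchib : ∀ x : E, |chiFun π ψ x| ≤ Kχ * (dist xbar x + Cst) := by
    intro x
    have hsn : Summable fun i : ℕ => ‖(Pfun π)^[i] ψ x‖ := by
      refine Summable.of_nonneg_of_le (fun i => norm_nonneg _) (fun i => ?_)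
        (hgeo.mul_left (K0 * (dist xbar x + Cst)))
      rw [Real.norm_eq_abs]
      calc |(Pfun π)^[i] ψ x| ≤ K0 * γ ^ i * (dist xbar x + Cst) := hgb i x
        _ = (K0 * (dist xbar x + Cst)) * γ ^ i := by ring
    calc |chiFun π ψ x| = ‖∑' i : ℕ, (Pfun π)^[i] ψ x‖ := by
          simp only [chiFun, Real.norm_eq_abs]
      _ ≤ ∑' i : ℕ, ‖(Pfun π)^[i] ψ x‖ := norm_tsum_le_tsum_norm hsn
      _ ≤ ∑' i : ℕ, (K0 * (dist xbar x + Cst)) * γ ^ i := by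
          refine Summable.tsum_le_tsum (fun i => ?_) hsn (hgeo.mul_left _)
          rw [Real.norm_eq_abs]
          calc |(Pfun π)^[i] ψ x| ≤ K0 * γ ^ i * (dist xbar x + Cst) := hgb i x
            _ = (K0 * (dist xbar x + Cst)) * γ ^ i := by ring
      _ = (K0 * (dist xbar x + Cst)) * (1 - γ)⁻¹ := by
          rw [tsum_mul_left, tsum_geometric_of_lt_one hγ0.le hγ1]
      _ = Kχ * (dist xbar x + Cst) := by rw [hKχdef]; ring
  have hchid : ∀ x y : E, |chiFun π ψ x - chiFun π ψ y| ≤ Kχ * dist x y := by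
    intro x y
    have hsn : Summable fun i : ℕ => ‖(Pfun π)^[i] ψ x - (Pfun π)^[i] ψ y‖ := by
      refine Summable.of_nonneg_of_le (fun i => norm_nonneg _) (fun i => ?_)
        (hgeo.mul_left (K0 * dist x y))
      rw [Real.norm_eq_abs]
      calc |(Pfun π)^[i] ψ x - (Pfun π)^[i] ψ y| ≤ K0 * γ ^ i * dist x y := hgd i x y
        _ = (K0 * dist x y) * γ ^ i := by ring
    have e : chiFun π ψ x - chiFun π ψ y = ∑' i : ℕ, ((Pfun π)^[i] ψ x - (Pfun π)^[i] ψ y) := by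
      simp only [chiFun]
      exact (Summable.tsum_sub (hsumg x) (hsumg y)).symm
    rw [e]
    calc |∑' i : ℕ, ((Pfun π)^[i] ψ x - (Pfun π)^[i] ψ y)|
        = ‖∑' i : ℕ, ((Pfun π)^[i] ψ x - (Pfun π)^[i] ψ y)‖ := (Real.norm_eq_abs _).symm
      _ ≤ ∑' i : ℕ, ‖(Pfun π)^[i] ψ x - (Pfun π)^[i] ψ y‖ := norm_tsum_le_tsum_norm hsn
      _ ≤ ∑' i : ℕ, (K0 * dist x y) * γ ^ i := by
          refine Summable.tsum_le_tsum (fun i => ?_) hsn (hgeo.mul_left _)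
          rw [Real.norm_eq_abs]
          calc |(Pfun π)^[i] ψ x - (Pfun π)^[i] ψ y| ≤ K0 * γ ^ i * dist x y := hgd i x y
            _ = (K0 * dist x y) * γ ^ i := by ring
      _ = (K0 * dist x y) * (1 - γ)⁻¹ := by
          rw [tsum_mul_left, tsum_geometric_of_lt_one hγ0.le hγ1]
      _ = Kχ * dist x y := by rw [hKχdef]; ring
  have hχm : Measurable (chiFun π ψ) := (lipR_cont hKχ.le hchid).measurable
  have hψm : Measurable ψ := hψ.continuous.measurable
  have hZm : ∀ n : ℕ, Measurable (ZFun π ψ n) := by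
    intro n
    show Measurable fun ω : ℕ → E => chiFun π ψ (ω n) - chiFun π ψ (ω (n-1)) + ψ (ω n)
    exact ((hχm.comp (measurable_pi_apply n)).sub
      (hχm.comp (measurable_pi_apply (n-1)))).add (hψm.comp (measurable_pi_apply n))
  set D0 : ℝ := dist xbar x₀ with hD0def
  have hD0 : 0 ≤ D0 := dist_nonneg
  set A2 : ℝ := 2 * (Kχ * (D0 + Cst)) + |ψ x₀| with hA2def
  have hA2nn : 0 ≤ A2 := by
    have h1 : 0 ≤ Kχ * (D0 + Cst) := mul_nonneg hKχ.le (by linarith)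
    have h2 : 0 ≤ |ψ x₀| := abs_nonneg _
    rw [hA2def]; linarith
  set B2 : ℝ := Kχ + Lc with hB2def
  have hB2 : 0 < B2 := by rw [hB2def]; linarith
  have hZb : ∀ (n : ℕ) (ω : ℕ → E),
      |ZFun π ψ n ω| ≤ A2 + B2 * dist x₀ (ω n) + B2 * dist x₀ (ω (n-1)) := by
    intro n ω
    have h1 := hchib (ω n)
    have h2 := hchib (ω (n-1))
    have h3 : |ψ (ω n)| ≤ |ψ x₀| + Lc * dist x₀ (ω n) := by
      have h := hψ' (ω n) x₀
      rw [dist_comm] at h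
      have e : ψ (ω n) - ψ x₀ + ψ x₀ = ψ (ω n) := by ring
      calc |ψ (ω n)| = |ψ (ω n) - ψ x₀ + ψ x₀| := by rw [e]
        _ ≤ |ψ (ω n) - ψ x₀| + |ψ x₀| := abs_add_le _ _
        _ ≤ |ψ x₀| + Lc * dist x₀ (ω n) := by linarith
    have ht1 : dist xbar (ω n) ≤ D0 + dist x₀ (ω n) := by
      rw [hD0def]; exact dist_triangle xbar x₀ (ω n)
    have ht2 : dist xbar (ω (n-1)) ≤ D0 + dist x₀ (ω (n-1)) := by
      rw [hD0def]; exact dist_triangle xbar x₀ (ω (n-1))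
    have htri : |ZFun π ψ n ω|
        ≤ |chiFun π ψ (ω n)| + |chiFun π ψ (ω (n-1))| + |ψ (ω n)| := by
      show |chiFun π ψ (ω n) - chiFun π ψ (ω (n-1)) + ψ (ω n)| ≤ _
      calc |chiFun π ψ (ω n) - chiFun π ψ (ω (n-1)) + ψ (ω n)|
          ≤ |chiFun π ψ (ω n) - chiFun π ψ (ω (n-1))| + |ψ (ω n)| := abs_add_le _ _
        _ ≤ |chiFun π ψ (ω n)| + |chiFun π ψ (ω (n-1))| + |ψ (ω n)| := by
            have := abs_sub (chiFun π ψ (ω n)) (chiFun π ψ (ω (n-1)))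
            linarith
    have hc1 : |chiFun π ψ (ω n)| ≤ Kχ * (D0 + dist x₀ (ω n) + Cst) :=
      h1.trans (mul_le_mul_of_nonneg_left (by linarith) hKχ.le)
    have hc2 : |chiFun π ψ (ω (n-1))| ≤ Kχ * (D0 + dist x₀ (ω (n-1)) + Cst) :=
      h2.trans (mul_le_mul_of_nonneg_left (by linarith) hKχ.le)
    have hd1 : (0:ℝ) ≤ dist x₀ (ω n) := dist_nonneg
    have hd2 : (0:ℝ) ≤ dist x₀ (ω (n-1)) := dist_nonneg
    rw [hA2def, hB2def]
    have e1 : Kχ * (D0 + dist x₀ (ω n) + Cst)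
        = Kχ * (D0 + Cst) + Kχ * dist x₀ (ω n) := by ring
    have e2 : Kχ * (D0 + dist x₀ (ω (n-1)) + Cst)
        = Kχ * (D0 + Cst) + Kχ * dist x₀ (ω (n-1)) := by ring
    have e3 : (Kχ + Lc) * dist x₀ (ω n) = Kχ * dist x₀ (ω n) + Lc * dist x₀ (ω n) := by ring
    have e4 : (Kχ + Lc) * dist x₀ (ω (n-1))
        = Kχ * dist x₀ (ω (n-1)) + Lc * dist x₀ (ω (n-1)) := by ring
    have e5 : 0 ≤ Lc * dist x₀ (ω (n-1)) := mul_nonneg hLc.le hd2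
    linarith only [htri, hc1, hc2, h3, e1, e2, e3, e4, e5]
  have hp0 : (0:ℝ) ≤ 2 + δ := by linarith
  set C1 : ℝ := 3 ^ (2+δ) * A2 ^ (2+δ) with hC1def
  set C2 : ℝ := 3 ^ (2+δ) * B2 ^ (2+δ) with hC2def
  have h3p : (0:ℝ) ≤ (3:ℝ) ^ (2+δ) := Real.rpow_nonneg (by norm_num) _
  have hC2nn : 0 ≤ C2 := by rw [hC2def]; exact mul_nonneg h3p (Real.rpow_nonneg hB2.le _)
  have hFb : ∀ (n : ℕ) (ω : ℕ → E), |ZFun π ψ n ω| ^ (2+δ)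
      ≤ C1 + C2 * dist x₀ (ω n) ^ (2+δ) + C2 * dist x₀ (ω (n-1)) ^ (2+δ) := by
    intro n ω
    have hd1 : (0:ℝ) ≤ dist x₀ (ω n) := dist_nonneg
    have hd2 : (0:ℝ) ≤ dist x₀ (ω (n-1)) := dist_nonneg
    have h1 : |ZFun π ψ n ω| ^ (2+δ)
        ≤ (A2 + B2 * dist x₀ (ω n) + B2 * dist x₀ (ω (n-1))) ^ (2+δ) :=
      Real.rpow_le_rpow (abs_nonneg _) (hZb n ω) hp0
    have h2 := add3_rpow_le hA2nn (mul_nonneg hB2.le hd1) (mul_nonneg hB2.le hd2) hp0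
    have h3 : (B2 * dist x₀ (ω n)) ^ (2+δ) = B2 ^ (2+δ) * dist x₀ (ω n) ^ (2+δ) :=
      Real.mul_rpow hB2.le hd1
    have h4 : (B2 * dist x₀ (ω (n-1))) ^ (2+δ)
        = B2 ^ (2+δ) * dist x₀ (ω (n-1)) ^ (2+δ) := Real.mul_rpow hB2.le hd2
    calc |ZFun π ψ n ω| ^ (2+δ)
        ≤ 3 ^ (2+δ) * (A2 ^ (2+δ) + (B2 * dist x₀ (ω n)) ^ (2+δ)
          + (B2 * dist x₀ (ω (n-1))) ^ (2+δ)) := h1.trans h2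
      _ = C1 + C2 * dist x₀ (ω n) ^ (2+δ) + C2 * dist x₀ (ω (n-1)) ^ (2+δ) := by
          rw [h3, h4, hC1def, hC2def]; ring
  have hGint : ∀ n : ℕ, Integrable (fun ω : ℕ → E =>
      C1 + C2 * dist x₀ (ω n) ^ (2+δ) + C2 * dist x₀ (ω (n-1)) ^ (2+δ)) Pμ := fun n =>
    ((integrable_const C1).add ((hH3int n).const_mul C2)).add ((hH3int (n-1)).const_mul C2)
  have hFmeas : ∀ n : ℕ,
      AEStronglyMeasurable (fun ω : ℕ → E => |ZFun π ψ n ω| ^ (2+δ)) Pμ := fun n =>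
    ((Real.continuous_rpow_const hp0).measurable.comp (hZm n).abs).aestronglyMeasurable
  have hFint : ∀ n : ℕ, Integrable (fun ω : ℕ → E => |ZFun π ψ n ω| ^ (2+δ)) Pμ := by
    intro n
    refine (hGint n).mono' (hFmeas n) (ae_of_all _ fun ω => ?_)
    rw [Real.norm_eq_abs, abs_of_nonneg (Real.rpow_nonneg (abs_nonneg _) _)]
    exact hFb n ω
  obtain ⟨M3, hM3⟩ := hH3
  have hIb : ∀ n : ℕ, ∫ ω, |ZFun π ψ n ω| ^ (2+δ) ∂Pμ ≤ C1 + C2 * M3 + C2 * M3 := by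
    intro n
    have e : ∫ ω, (C1 + C2 * dist x₀ (ω n) ^ (2+δ) + C2 * dist x₀ (ω (n-1)) ^ (2+δ)) ∂Pμ
        = C1 + C2 * (∫ ω, dist x₀ (ω n) ^ (2+δ) ∂Pμ)
          + C2 * ∫ ω, dist x₀ (ω (n-1)) ^ (2+δ) ∂Pμ := by
      have i1 : Integrable (fun ω : ℕ → E => C2 * dist x₀ (ω n) ^ (2+δ)) Pμ :=
        (hH3int n).const_mul C2
      have i2 : Integrable (fun ω : ℕ → E => C2 * dist x₀ (ω (n-1)) ^ (2+δ)) Pμ :=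
        (hH3int (n-1)).const_mul C2
      have i3 : Integrable (fun ω : ℕ → E => C1 + C2 * dist x₀ (ω n) ^ (2+δ)) Pμ :=
        (integrable_const C1).add i1
      rw [integral_add i3 i2, integral_add (integrable_const C1) i1,
        integral_const, integral_const_mul, integral_const_mul]
      simp
    have hb1 := hM3 n
    have hb2 := hM3 (n-1)
    have hm1 : C2 * (∫ ω, dist x₀ (ω n) ^ (2+δ) ∂Pμ) ≤ C2 * M3 :=
      mul_le_mul_of_nonneg_left hb1 hC2nn
    have hm2 : C2 * (∫ ω, dist x₀ (ω (n-1)) ^ (2+δ) ∂Pμ) ≤ C2 * M3 :=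
      mul_le_mul_of_nonneg_left hb2 hC2nn
    calc ∫ ω, |ZFun π ψ n ω| ^ (2+δ) ∂Pμ
        ≤ ∫ ω, (C1 + C2 * dist x₀ (ω n) ^ (2+δ) + C2 * dist x₀ (ω (n-1)) ^ (2+δ)) ∂Pμ :=
          integral_mono (hFint n) (hGint n) (hFb n)
      _ = C1 + C2 * (∫ ω, dist x₀ (ω n) ^ (2+δ) ∂Pμ)
          + C2 * ∫ ω, dist x₀ (ω (n-1)) ^ (2+δ) ∂Pμ := e
      _ ≤ C1 + C2 * M3 + C2 * M3 := by linarith only [hm1, hm2]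
  refine ⟨C1 + C2 * M3 + C2 * M3, fun n _ => hFint n, fun n _ => hIb n, ?_, ?_⟩
  · intro k hk n hn
    have hsq2 : ∀ t : ℝ, 0 ≤ t → t ^ (2:ℝ) = t ^ (2:ℕ) := fun t ht => by
      rw [show (2:ℝ) = ((2:ℕ):ℝ) by norm_num, Real.rpow_natCast]
    have hZsqint : Integrable (fun ω => ZFun π ψ n ω ^ 2) Pμ := by
      refine ((integrable_const (1:ℝ)).add (hFint n)).mono'
        ((hZm n).pow_const 2).aestronglyMeasurable (ae_of_all _ fun ω => ?_)
      rw [Real.norm_eq_abs, abs_of_nonneg (sq_nonneg _)]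
      simp only [Pi.add_apply]
      rcases le_total (|ZFun π ψ n ω|) 1 with h | h
      · have e1 : ZFun π ψ n ω ^ 2 = |ZFun π ψ n ω| ^ 2 := (sq_abs _).symm
        have e2 : |ZFun π ψ n ω| ^ 2 ≤ 1 := by
          rw [sq]
          exact mul_le_one₀ h (abs_nonneg _) h
        have e3 := Real.rpow_nonneg (abs_nonneg (ZFun π ψ n ω)) (2+δ)
        linarith only [e1, e2, e3]
      · have e1 : |ZFun π ψ n ω| ^ (2:ℝ) ≤ |ZFun π ψ n ω| ^ (2+δ) :=
          Real.rpow_le_rpow_of_exponent_le h (by linarith only [hδ])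
        have e2 : |ZFun π ψ n ω| ^ (2:ℝ) = |ZFun π ψ n ω| ^ (2:ℕ) :=
          hsq2 _ (abs_nonneg _)
        have e3 := sq_abs (ZFun π ψ n ω)
        calc ZFun π ψ n ω ^ 2 = |ZFun π ψ n ω| ^ (2:ℝ) := (e2.trans e3).symm
          _ ≤ |ZFun π ψ n ω| ^ (2+δ) := e1
          _ ≤ 1 + |ZFun π ψ n ω| ^ (2+δ) := le_add_of_nonneg_left zero_le_one
    have hS : MeasurableSet {ω : ℕ → E | k ≤ ZFun π ψ n ω ^ 2} :=
      measurableSet_le measurable_const ((hZm n).pow_const 2)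
    have hub : ∀ ω ∈ {ω : ℕ → E | k ≤ ZFun π ψ n ω ^ 2},
        ZFun π ψ n ω ^ 2 ≤ k ^ (-(δ/2)) * |ZFun π ψ n ω| ^ (2+δ) := by
      intro ω hω
      simp only [Set.mem_setOf_eq] at hω
      have hZne : ZFun π ψ n ω ≠ 0 := by
        intro h
        rw [h] at hω
        simp at hω
        linarith
      have habs : 0 < |ZFun π ψ n ω| := abs_pos.mpr hZne
      have hsqe : |ZFun π ψ n ω| ^ (2:ℝ) = ZFun π ψ n ω ^ 2 := by
        rw [hsq2 _ (abs_nonneg _), sq_abs]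
      have hsk : Real.sqrt k ≤ |ZFun π ψ n ω| := by
        calc Real.sqrt k ≤ Real.sqrt (ZFun π ψ n ω ^ 2) := Real.sqrt_le_sqrt hω
          _ = |ZFun π ψ n ω| := Real.sqrt_sq_eq_abs _
      have hkd : k ^ (δ/2) ≤ |ZFun π ψ n ω| ^ δ := by
        have e1 : k ^ (δ/2) = (Real.sqrt k) ^ δ := by
          rw [Real.sqrt_eq_rpow, ← Real.rpow_mul hk.le]
          congr 1
          ring
        rw [e1]
        exact Real.rpow_le_rpow (Real.sqrt_nonneg k) hsk hδ.le
      have hmain : k ^ (δ/2) * ZFun π ψ n ω ^ 2 ≤ |ZFun π ψ n ω| ^ (2+δ) := by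
        calc k ^ (δ/2) * ZFun π ψ n ω ^ 2 = ZFun π ψ n ω ^ 2 * k ^ (δ/2) := by ring
          _ ≤ ZFun π ψ n ω ^ 2 * |ZFun π ψ n ω| ^ δ :=
            mul_le_mul_of_nonneg_left hkd (sq_nonneg _)
          _ = |ZFun π ψ n ω| ^ (2:ℝ) * |ZFun π ψ n ω| ^ δ := by rw [hsqe]
          _ = |ZFun π ψ n ω| ^ (2+δ) := (Real.rpow_add habs 2 δ).symm
      have hkp : 0 < k ^ (δ/2:ℝ) := Real.rpow_pos_of_pos hk _
      have h6 := mul_le_mul_of_nonneg_left hmain (inv_nonneg.mpr hkp.le)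
      rw [← mul_assoc, inv_mul_cancel₀ hkp.ne', one_mul] at h6
      rw [Real.rpow_neg hk.le]
      exact h6
    have hnn : 0 ≤ k ^ (-(δ/2):ℝ) := Real.rpow_nonneg hk.le _
    calc ∫ ω in {ω : ℕ → E | k ≤ ZFun π ψ n ω ^ 2}, ZFun π ψ n ω ^ 2 ∂Pμ
        ≤ ∫ ω in {ω : ℕ → E | k ≤ ZFun π ψ n ω ^ 2},
            k ^ (-(δ/2)) * |ZFun π ψ n ω| ^ (2+δ) ∂Pμ :=
          setIntegral_mono_on hZsqint.integrableOn
            (((hFint n).const_mul _).integrableOn) hS hub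
      _ = k ^ (-(δ/2)) * ∫ ω in {ω : ℕ → E | k ≤ ZFun π ψ n ω ^ 2},
            |ZFun π ψ n ω| ^ (2+δ) ∂Pμ := integral_const_mul _ _
      _ ≤ k ^ (-(δ/2)) * ∫ ω, |ZFun π ψ n ω| ^ (2+δ) ∂Pμ :=
          mul_le_mul_of_nonneg_left (setIntegral_le_integral (hFint n)
            (ae_of_all _ fun ω => Real.rpow_nonneg (abs_nonneg _) _)) hnn
      _ ≤ k ^ (-(δ/2)) * (C1 + C2 * M3 + C2 * M3) :=
          mul_le_mul_of_nonneg_left (hIb n) hnn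
  · have h := (tendsto_rpow_neg_atTop (show (0:ℝ) < δ/2 by linarith)).mul_const
      (C1 + C2 * M3 + C2 * M3)
    simpa using h
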